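/- arXiv:2110.05939 — 6 statements merged into one kernel-verified Lean document; each statement's English description precedes it below -/
import Mathlib

section
/- In a finite game admitting an ordinal potential, there is no infinite improvement path; that is, there is no infinite sequence of strategy profiles y^0, y^1, y^2, … such that each consecutive pair is an improvement step. -/
/-- In a finite game admitting an ordinal potential, there is no infinite improvement
path: no infinite sequence of strategy profiles in which each consecutive pair is an
improvement step (i.e. the two profiles differ only in the coordinate of some player `i`
and that player's utility strictly increases). -/
theorem no_infinite_improvement_path
    {I : Type*} [Fintype I] (Y : I → Type*) [∀ i, Fintype (Y i)] [∀ i, Nonempty (Y i)]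
    (U : I → (∀ i, Y i) → ℝ) (φ : (∀ i, Y i) → ℝ)
    (hpot : ∀ (i : I) (y y' : ∀ i, Y i), (∀ j, j ≠ i → y' j = y j) →
      (U i y' > U i y ↔ φ y' > φ y)) :
    ¬ ∃ seq : ℕ → (∀ i, Y i), ∀ n : ℕ, ∃ i : I,
        (∀ j, j ≠ i → seq (n + 1) j = seq n j) ∧ U i (seq (n + 1)) > U i (seq n) := by
  rintro ⟨seq, h⟩
  have mono : StrictMono (φ ∘ seq) := by
    apply strictMono_nat_of_lt_succ
    intro n
    obtain ⟨i, hdiff, hU⟩ := h n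
    exact (hpot i (seq n) (seq (n + 1)) hdiff).mp hU
  have hinj : Function.Injective seq :=
    fun a b hab => mono.injective (by simp [Function.comp, hab])
  obtain ⟨a, b, hne, heq⟩ := Finite.exists_ne_map_eq_of_infinite seq
  exact hne (hinj heq)
end

section
/- In a finite game admitting an ordinal potential φ, any strategy profile that maximizes φ over all profiles is a pure Nash equilibrium; in particular, every finite ordinal potential game possesses a pure Nash equilibrium. -/
/-- In a finite game admitting an ordinal potential `φ`, any strategy profile that
maximizes `φ` over all profiles is a pure Nash equilibrium; in particular, every finite
ordinal potential game possesses a pure Nash equilibrium. -/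
theorem potential_maximizer_is_nash
    {I : Type*} [Fintype I] [DecidableEq I]
    (Y : I → Type*) [∀ i, Fintype (Y i)] [∀ i, Nonempty (Y i)]
    (U : I → (∀ i, Y i) → ℝ) (φ : (∀ i, Y i) → ℝ)
    (hpot : ∀ (i : I) (y : ∀ i, Y i) (y'i : Y i),
      (U i (Function.update y i y'i) > U i y ↔ φ (Function.update y i y'i) > φ y)) :
    (∀ y : ∀ i, Y i, (∀ y' : ∀ i, Y i, φ y' ≤ φ y) →
      ∀ (i : I) (y'i : Y i), U i (Function.update y i y'i) ≤ U i y) ∧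
    (∃ y : ∀ i, Y i, ∀ (i : I) (y'i : Y i), U i (Function.update y i y'i) ≤ U i y) := by
  have key : ∀ y : ∀ i, Y i, (∀ y' : ∀ i, Y i, φ y' ≤ φ y) →
      ∀ (i : I) (y'i : Y i), U i (Function.update y i y'i) ≤ U i y := by
    intro y hmax i y'i
    by_contra h
    exact absurd (hmax _) (not_le.2 ((hpot i y y'i).1 (not_le.1 h)))
  refine ⟨key, ?_⟩
  obtain ⟨y, hy⟩ := Finite.exists_max φ
  exact ⟨y, key y hy⟩
end

section
/- In a finite game admitting an ordinal potential, from every strategy profile y there exists a finite improvement path starting at y and ending at a pure Nash equilibrium of the game. -/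
/-- In a finite game admitting an ordinal potential, from every strategy profile `y`
there is a finite improvement path starting at `y` and ending at a pure Nash
equilibrium of the game. -/
theorem improvement_path_to_nash
    {I : Type*} [Fintype I] [DecidableEq I]
    (Y : I → Type*) [∀ i, Fintype (Y i)] [∀ i, Nonempty (Y i)]
    (U : I → (∀ i, Y i) → ℝ) (φ : (∀ i, Y i) → ℝ)
    (hpot : ∀ (i : I) (y : ∀ i, Y i) (y'i : Y i),
      (U i (Function.update y i y'i) > U i y ↔ φ (Function.update y i y'i) > φ y)) :
    ∀ y : ∀ i, Y i, ∃ (L : ℕ) (p : ℕ → ∀ i, Y i),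
      p 0 = y ∧
      (∀ n < L, ∃ i : I,
        (∀ j, j ≠ i → p (n + 1) j = p n j) ∧ U i (p (n + 1)) > U i (p n)) ∧
      (∀ (i : I) (y'i : Y i), U i (Function.update (p L) i y'i) ≤ U i (p L)) := by
  classical
  suffices h : ∀ (n : ℕ) (y : ∀ i, Y i),
      (Finset.univ.filter (fun z => φ z > φ y)).card ≤ n →
      ∃ (L : ℕ) (p : ℕ → ∀ i, Y i),
        p 0 = y ∧
        (∀ n < L, ∃ i : I,
          (∀ j, j ≠ i → p (n + 1) j = p n j) ∧ U i (p (n + 1)) > U i (p n)) ∧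
        (∀ (i : I) (y'i : Y i), U i (Function.update (p L) i y'i) ≤ U i (p L)) by
    intro y
    exact h _ y le_rfl
  intro n
  induction n with
  | zero =>
    intro y hy
    refine ⟨0, fun _ => y, rfl, by intro n hn; omega, ?_⟩
    intro i y'i
    by_contra hlt
    push_neg at hlt
    have hφ : φ (Function.update y i y'i) > φ y := (hpot i y y'i).1 hlt
    have : Function.update y i y'i ∈ Finset.univ.filter (fun z => φ z > φ y) := by
      simp [hφ]
    have := Finset.card_pos.mpr ⟨_, this⟩
    omega
  | succ n ih =>
    intro y hy
    by_cases hnash : ∀ (i : I) (y'i : Y i), U i (Function.update y i y'i) ≤ U i y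
    · exact ⟨0, fun _ => y, rfl, by intro n hn; omega, hnash⟩
    · push_neg at hnash
      obtain ⟨i, y'i, hlt⟩ := hnash
      set y' := Function.update y i y'i with hy'
      have hφ : φ y' > φ y := (hpot i y y'i).1 hlt
      have hcard : (Finset.univ.filter (fun z => φ z > φ y')).card ≤ n := by
        have hss : Finset.univ.filter (fun z => φ z > φ y') ⊂
            Finset.univ.filter (fun z => φ z > φ y) := by
          constructor
          · intro z hz
            simp only [Finset.mem_filter, Finset.mem_univ, true_and] at hz ⊢
            exact lt_trans hφ hz
          · intro hsub
            have h1 : y' ∈ Finset.univ.filter (fun z => φ z > φ y) := by simp [hφ]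
            have h2 := hsub h1
            simp only [Finset.mem_filter, Finset.mem_univ, true_and] at h2
            exact lt_irrefl _ h2
        have := Finset.card_lt_card hss
        omega
      obtain ⟨L, p, hp0, hstep, hnash'⟩ := ih y' hcard
      refine ⟨L + 1, fun k => if k = 0 then y else p (k - 1), by simp, ?_, ?_⟩
      · intro m hm
        rcases Nat.eq_zero_or_pos m with hm0 | hm0
        · subst hm0
          refine ⟨i, ?_, ?_⟩
          · intro j hj
            simp only [if_neg (by omega : (0:ℕ) + 1 ≠ 0), if_pos rfl]
            simp only [Nat.add_sub_cancel, hp0, hy']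
            exact Function.update_of_ne hj _ _
          · simpa [hp0] using hlt
        · obtain ⟨k, rfl⟩ := Nat.exists_eq_add_of_le hm0
          obtain ⟨j, hj1, hj2⟩ := hstep k (by omega)
          refine ⟨j, ?_, ?_⟩
          · intro l hl
            simpa [Nat.add_comm] using hj1 l hl
          · simpa [Nat.add_comm] using hj2
      · intro i' y''
        simpa using hnash' i' y''
end

section
/- There exist a mixed strategy z* in the standard simplex of ℝ^n and a column j* that is a best response to z* such that for every z in the standard simplex and every column j that is a best response to z, the IP's expected payoff satisfies Σ_i z*_i · A i j* ≥ Σ_i z_i · A i j. In other words, the IP's expected payoff over all (mixed strategy, opponent pure best response) pairs attains a maximum. -/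
private lemma cont_pay {n m : ℕ} (M : Matrix (Fin n) (Fin m) ℝ) :
    Continuous (fun p : (Fin n → ℝ) × Fin m => ∑ i, p.1 i * M i p.2) := by
  apply continuous_finset_sum
  intro i _
  exact ((continuous_apply i).comp continuous_fst).mul
    (Continuous.comp (continuous_of_discreteTopology (f := fun j => M i j)) continuous_snd)

/-- There exist a mixed strategy `z*` in the standard simplex and a column `j*` that is a
best response to `z*` such that for every `z` in the simplex and every best response `j`
to `z`, the IP's expected payoff at `(z*, j*)` is at least that at `(z, j)`. -/
theorem ip_payoff_attains_max
    (n m : ℕ) (hn : 1 ≤ n) (hm : 1 ≤ m)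
    (A B : Matrix (Fin n) (Fin m) ℝ) :
    ∃ zstar ∈ stdSimplex ℝ (Fin n), ∃ jstar : Fin m,
      (∀ k : Fin m, ∑ i, zstar i * B i k ≤ ∑ i, zstar i * B i jstar) ∧
      ∀ z ∈ stdSimplex ℝ (Fin n), ∀ j : Fin m,
        (∀ k : Fin m, ∑ i, z i * B i k ≤ ∑ i, z i * B i j) →
        ∑ i, zstar i * A i jstar ≥ ∑ i, z i * A i j := by
  have hnm : NeZero m := ⟨Nat.one_le_iff_ne_zero.mp hm⟩
  set S : Set ((Fin n → ℝ) × Fin m) :=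
    {p | p.1 ∈ stdSimplex ℝ (Fin n) ∧ ∀ k, ∑ i, p.1 i * B i k ≤ ∑ i, p.1 i * B i p.2}
  -- S is closed
  have hSclosed : IsClosed S := by
    have : S = (Prod.fst ⁻¹' stdSimplex ℝ (Fin n)) ∩
        ⋂ k : Fin m, {p : (Fin n → ℝ) × Fin m |
          ∑ i, p.1 i * B i k ≤ ∑ i, p.1 i * B i p.2} := by
      ext p; simp [S, Set.mem_iInter]
    rw [this]
    refine ((isClosed_stdSimplex _ _).preimage continuous_fst).inter
      (isClosed_iInter fun k => ?_)
    exact isClosed_le (cont_pay (fun i _ => B i k)) (cont_pay B)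
  have hSsub : S ⊆ (stdSimplex ℝ (Fin n)) ×ˢ (Set.univ : Set (Fin m)) := by
    rintro p ⟨h1, _⟩; exact ⟨h1, trivial⟩
  have hScompact : IsCompact S :=
    ((isCompact_stdSimplex _ _).prod isCompact_univ).of_isClosed_subset hSclosed hSsub
  -- S is nonempty
  have hSne : S.Nonempty := by
    set z0 : Fin n → ℝ := fun _ => (n : ℝ)⁻¹
    have hz0 : z0 ∈ stdSimplex ℝ (Fin n) := by
      constructor
      · intro i; positivity
      · simp [z0, Finset.sum_const]
        field_simp
    obtain ⟨j0, _, hj0⟩ := Finset.exists_max_image Finset.univ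
      (fun j => ∑ i, z0 i * B i j) ⟨(⟨0, hm⟩ : Fin m), Finset.mem_univ _⟩
    exact ⟨(z0, j0), hz0, fun k => hj0 k (Finset.mem_univ _)⟩
  obtain ⟨p, hpS, hpmax⟩ := hScompact.exists_isMaxOn hSne (cont_pay A).continuousOn
  exact ⟨p.1, hpS.1, p.2, hpS.2, fun z hz j hj => hpmax (⟨hz, hj⟩ : (z, j) ∈ S)⟩
end

section
/- For the block trajectory x with prefix length τ' ≥ T, the following hold for every n ≥ 1: the empirical frequency of the symbol 0 at time n is at least c(0)/T, i.e. #{k < n : x(k) = 0}/n ≥ c(0)/T, and for every symbol s ≠ 0, the empirical frequency of s at time n is at most c(s)/T, i.e. #{k < n : x(k) = s}/n ≤ c(s)/T. -/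
theorem count_mod_interval (T a b : ℕ) (hT : 1 ≤ T) (hab : a ≤ b) (hbT : b ≤ T) :
    ∀ N : ℕ, ((Finset.range N).filter (fun j => a ≤ j % T ∧ j % T < b)).card
      = N / T * (b - a) + (min (N % T) b - min (N % T) a) := by
  intro N
  induction N with
  | zero => simp
  | succ N ih =>
    rw [Finset.range_add_one, Finset.filter_insert]
    have hr : N % T < T := Nat.mod_lt _ hT
    have e : N / T * T + N % T = N := by rw [mul_comm]; exact Nat.div_add_mod N T
    by_cases hend : N % T + 1 = T
    · have heq : N + 1 = (N / T + 1) * T := by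
        rw [add_mul, one_mul]; omega
      have h1 : (N + 1) % T = 0 := by rw [heq, Nat.mul_mod_left]
      have h2 : (N + 1) / T = N / T + 1 := by rw [heq, Nat.mul_div_cancel _ hT]
      rw [h1, h2, add_mul, one_mul]
      generalize N / T * (b - a) = Q at ih ⊢
      by_cases hp : a ≤ N % T ∧ N % T < b
      · rw [if_pos hp, Finset.card_insert_of_notMem (by simp), ih]
        omega
      · rw [if_neg hp, ih]
        omega
    · have heq : N + 1 = N % T + 1 + N / T * T := by omega
      have h1 : (N + 1) % T = N % T + 1 := by
        rw [heq, Nat.add_mul_mod_self_right, Nat.mod_eq_of_lt (by omega)]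
      have h2 : (N + 1) / T = N / T := by
        rw [heq, Nat.add_mul_div_right _ _ hT, Nat.div_eq_of_lt (by omega), zero_add]
      rw [h1, h2]
      generalize N / T * (b - a) = Q at ih ⊢
      by_cases hp : a ≤ N % T ∧ N % T < b
      · rw [if_pos hp, Finset.card_insert_of_notMem (by simp), ih]
        omega
      · rw [if_neg hp, ih]
        omega


/-- For the block trajectory `x` (a prefix of `τ'` plays of symbol `0` followed by
indefinite repetition of the block consisting of `c 0` copies of `0`, then `c 1` copies
of `1`, …), with `τ' ≥ T := ∑ s, c s`: for every `n ≥ 1`, the empirical frequency of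
symbol `0` at time `n` is at least `c 0 / T`, and for every symbol `s ≠ 0` the empirical
frequency of `s` at time `n` is at most `c s / T`. -/
theorem block_trajectory_frequency_bounds
    (m : ℕ) (hm : 1 ≤ m) (c : Fin m → ℕ) (hT : 1 ≤ ∑ s, c s)
    (τ' : ℕ) (hτ' : ∑ s, c s ≤ τ')
    (x : ℕ → Fin m)
    (hx1 : ∀ n < τ', x n = ⟨0, hm⟩)
    (hx2 : ∀ n, τ' ≤ n →
      (∑ u ∈ Finset.univ.filter (fun u => u < x n), c u) ≤ (n - τ') % (∑ s, c s) ∧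
      (n - τ') % (∑ s, c s) < ∑ u ∈ Finset.univ.filter (fun u => u ≤ x n), c u) :
    ∀ n : ℕ, 1 ≤ n →
      ((c ⟨0, hm⟩ : ℝ) / ((∑ s, c s : ℕ) : ℝ) ≤
        (((Finset.range n).filter (fun k => x k = ⟨0, hm⟩)).card : ℝ) / (n : ℝ)) ∧
      (∀ s : Fin m, s ≠ ⟨0, hm⟩ →
        (((Finset.range n).filter (fun k => x k = s)).card : ℝ) / (n : ℝ) ≤
          (c s : ℝ) / ((∑ s, c s : ℕ) : ℝ)) := by
  intro n hn
  set T := ∑ s, c s with hTdef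
  set z : Fin m := ⟨0, hm⟩ with hz
  set A : Fin m → ℕ := fun s => ∑ u ∈ Finset.univ.filter (fun u => u < s), c u with hA
  set B : Fin m → ℕ := fun s => ∑ u ∈ Finset.univ.filter (fun u => u ≤ s), c u with hB
  have hAB : ∀ s : Fin m, B s = A s + c s := by
    intro s
    have h : Finset.univ.filter (fun u => u ≤ s) = insert s (Finset.univ.filter (fun u => u < s)) := by
      ext u
      simp only [Finset.mem_filter, Finset.mem_univ, true_and, Finset.mem_insert]
      rw [le_iff_lt_or_eq]
      tauto
    simp only [hA, hB]
    rw [h, Finset.sum_insert (by simp)]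
    ring
  have hBT : ∀ s : Fin m, B s ≤ T := by
    intro s
    exact Finset.sum_le_sum_of_subset (Finset.filter_subset _ _)
  have hA0 : A z = 0 := by
    simp only [hA]
    have : Finset.univ.filter (fun u => u < z) = (∅ : Finset (Fin m)) := by
      ext u; simp [hz, Fin.lt_def]
    rw [this, Finset.sum_empty]
  have hczT : c z ≤ T := by
    have := hAB z
    have := hBT z
    omega
  have hmono : ∀ s t : Fin m, s < t → B s ≤ A t := by
    intro s t hst
    apply Finset.sum_le_sum_of_subset
    intro u hu
    simp only [Finset.mem_filter, Finset.mem_univ, true_and] at hu ⊢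
    exact lt_of_le_of_lt hu hst
  have hchar : ∀ k, τ' ≤ k → ∀ s : Fin m,
      x k = s ↔ (A s ≤ (k - τ') % T ∧ (k - τ') % T < B s) := by
    intro k hk s
    obtain ⟨h1', h2'⟩ := hx2 k hk
    have h1 : A (x k) ≤ (k - τ') % T := h1'
    have h2 : (k - τ') % T < B (x k) := h2'
    constructor
    · rintro rfl; exact ⟨h1, h2⟩
    · rintro ⟨h3, h4⟩
      rcases lt_trichotomy (x k) s with h | h | h
      · exact absurd (hmono _ _ h) (by omega)
      · exact h
      · exact absurd (hmono _ _ h) (by omega)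
  have hTpos : (0 : ℝ) < (T : ℝ) := by exact_mod_cast hT
  have hnpos : (0 : ℝ) < (n : ℝ) := by exact_mod_cast hn
  rcases le_or_gt n τ' with hcase | hcase
  · -- n ≤ τ' : all plays so far are z
    have hall : ∀ k ∈ Finset.range n, x k = z :=
      fun k hk => hx1 k (lt_of_lt_of_le (Finset.mem_range.mp hk) hcase)
    constructor
    · rw [Finset.filter_true_of_mem hall]
      rw [Finset.card_range, div_self (ne_of_gt hnpos), div_le_one hTpos]
      exact_mod_cast hczT
    · intro s hs
      have : (Finset.range n).filter (fun k => x k = s) = ∅ := by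
        apply Finset.filter_false_of_mem
        intro k hk h
        exact hs (h ▸ hall k hk)
      rw [this]
      simp only [Finset.card_empty, Nat.cast_zero, zero_div]
      positivity
  · -- n > τ'
    have hsplit : ∀ s : Fin m, ((Finset.range n).filter (fun k => x k = s)).card
        = ((Finset.range τ').filter (fun k => x k = s)).card
          + ((Finset.Ico τ' n).filter (fun k => x k = s)).card := by
      intro s
      rw [← Finset.card_union_of_disjoint
        (Finset.disjoint_filter_filter (by
          rw [Finset.range_eq_Ico]
          exact Finset.Ico_disjoint_Ico_consecutive 0 τ' n))]
      congr 1
      rw [← Finset.filter_union, Finset.range_eq_Ico, Finset.range_eq_Ico,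
        Finset.Ico_union_Ico_eq_Ico (Nat.zero_le _) (le_of_lt hcase)]
    have hper : ∀ s : Fin m,
        ((Finset.Ico τ' n).filter (fun k => x k = s)).card
          = ((Finset.range (n - τ')).filter (fun j => A s ≤ j % T ∧ j % T < B s)).card := by
      intro s
      have hmap : Finset.Ico τ' n = (Finset.range (n - τ')).map
          ⟨fun j => j + τ', add_left_injective τ'⟩ := by
        ext k
        simp only [Finset.mem_Ico, Finset.mem_map, Finset.mem_range,
          Function.Embedding.coeFn_mk]
        constructor
        · rintro ⟨h1, h2⟩
          exact ⟨k - τ', by omega, (by omega : k - τ' + τ' = k)⟩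
        · rintro ⟨j, hj, rfl⟩
          exact (by omega : τ' ≤ j + τ' ∧ j + τ' < n)
      rw [hmap, Finset.filter_map, Finset.card_map]
      congr 1
      apply Finset.filter_congr
      intro j hj
      simp only [Function.Embedding.coeFn_mk, Function.comp]
      rw [hchar (j + τ') (by omega) s]
      simp
    set N := n - τ' with hN
    set q := N / T with hq
    set r := N % T with hr
    have hrT : r < T := Nat.mod_lt _ hT
    have hNqr : q * T + r = N := by rw [hq, hr, mul_comm]; exact Nat.div_add_mod N T
    have hn' : n = τ' + N := by omega
    constructor
    · -- lower bound for z
      have hpref : ((Finset.range τ').filter (fun k => x k = z)).card = τ' := by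
        rw [Finset.filter_true_of_mem (fun k hk => hx1 k (Finset.mem_range.mp hk)),
          Finset.card_range]
      have hcount : ((Finset.range n).filter (fun k => x k = z)).card
          = τ' + (q * c z + min r (c z)) := by
        rw [hsplit z, hper z, hpref,
          count_mod_interval T (A z) (B z) hT (by rw [hAB]; omega) (hBT z) N]
        rw [hA0, hAB z, hA0]
        simp only [zero_add, Nat.sub_zero, min_zero, Nat.sub_zero]
        rfl
      rw [hcount, div_le_div_iff₀ hTpos hnpos]
      have key : c z * n ≤ (τ' + (q * c z + min r (c z))) * T := by
        rcases le_total r (c z) with h | h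
        · rw [min_eq_left h]
          have p1 : c z * τ' ≤ T * τ' := Nat.mul_le_mul_right _ hczT
          have p2 : c z * r ≤ T * r := Nat.mul_le_mul_right _ hczT
          calc c z * n = c z * τ' + c z * (q * T) + c z * r := by rw [hn', ← hNqr]; ring
            _ ≤ T * τ' + c z * (q * T) + T * r := by omega
            _ = (τ' + (q * c z + r)) * T := by ring
        · rw [min_eq_right h]
          have p1 : c z * τ' ≤ T * τ' := Nat.mul_le_mul_right _ hczT
          have p2 : c z * r ≤ c z * T := Nat.mul_le_mul_left _ (le_of_lt hrT)
          calc c z * n = c z * τ' + c z * (q * T) + c z * r := by rw [hn', ← hNqr]; ring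
            _ ≤ T * τ' + c z * (q * T) + c z * T := by omega
            _ = (τ' + (q * c z + c z)) * T := by ring
      calc (c z : ℝ) * n = ((c z * n : ℕ) : ℝ) := by push_cast; ring
        _ ≤ (((τ' + (q * c z + min r (c z))) * T : ℕ) : ℝ) := by exact_mod_cast key
        _ = ((τ' + (q * c z + min r (c z)) : ℕ) : ℝ) * T := by push_cast; ring
    · -- upper bounds for s ≠ z
      intro s hs
      have hpref : ((Finset.range τ').filter (fun k => x k = s)).card = 0 := by
        rw [Finset.card_eq_zero]
        apply Finset.filter_false_of_mem
        intro k hk h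
        exact hs (h ▸ hx1 k (Finset.mem_range.mp hk))
      have hcount : ((Finset.range n).filter (fun k => x k = s)).card
          = q * c s + (min r (B s) - min r (A s)) := by
        rw [hsplit s, hper s, hpref,
          count_mod_interval T (A s) (B s) hT (by rw [hAB]; omega) (hBT s) N]
        rw [hAB s]
        simp only [Nat.add_sub_cancel_left, zero_add]
        rfl
      rw [hcount, div_le_div_iff₀ hnpos hTpos]
      have hABs := hAB s
      have key : (q * c s + (min r (B s) - min r (A s))) * T ≤ c s * n := by
        have hpart : min r (B s) - min r (A s) ≤ c s := by omega
        have p1 : c s * T ≤ c s * τ' := Nat.mul_le_mul_left _ hτ'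
        calc (q * c s + (min r (B s) - min r (A s))) * T
            ≤ (q * c s + c s) * T := by
              apply Nat.mul_le_mul_right; omega
          _ = c s * (q * T) + c s * T := by ring
          _ ≤ c s * (q * T) + c s * τ' := by omega
          _ ≤ c s * (τ' + (q * T + r)) := by
              have : c s * (τ' + (q * T + r)) = c s * (q * T) + c s * τ' + c s * r := by ring
              omega
          _ = c s * n := by rw [hn', ← hNqr]
      calc ((q * c s + (min r (B s) - min r (A s)) : ℕ) : ℝ) * T
          = (((q * c s + (min r (B s) - min r (A s))) * T : ℕ) : ℝ) := by push_cast; ring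
        _ ≤ ((c s * n : ℕ) : ℝ) := by exact_mod_cast key
        _ = (c s : ℝ) * n := by push_cast; ring
end

section
/- For the block trajectory x with prefix length τ' ≥ T and any payoff function g : Fin m → ℝ, the long-run average payoff converges: (1/n)·Σ_{k < n} g(x(k)) tends, as n → ∞, to (1/T)·Σ_{s ∈ Fin m} c(s)·g(s). -/
open Filter

set_option maxHeartbeats 1000000 in
/-- For the block trajectory `x` (a prefix of `τ'` plays of symbol `0` followed by
indefinite repetition of the block consisting of `c 0` copies of `0`, then `c 1` copies
of `1`, …), with `τ' ≥ T := ∑ s, c s`, and any payoff function `g : Fin m → ℝ`, the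
long-run average payoff `(1/n)·∑_{k<n} g (x k)` converges to `(1/T)·∑ s, c s · g s`. -/
theorem block_trajectory_average_payoff
    (m : ℕ) (hm : 1 ≤ m) (c : Fin m → ℕ) (hT : 1 ≤ ∑ s, c s)
    (τ' : ℕ) (hτ' : ∑ s, c s ≤ τ')
    (x : ℕ → Fin m)
    (hx1 : ∀ n < τ', x n = ⟨0, hm⟩)
    (hx2 : ∀ n, τ' ≤ n →
      (∑ u ∈ Finset.univ.filter (fun u => u < x n), c u) ≤ (n - τ') % (∑ s, c s) ∧
      (n - τ') % (∑ s, c s) < ∑ u ∈ Finset.univ.filter (fun u => u ≤ x n), c u)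
    (g : Fin m → ℝ) :
    Tendsto (fun n : ℕ => (1 / (n : ℝ)) * ∑ k ∈ Finset.range n, g (x k)) atTop
      (nhds ((1 / ((∑ s, c s : ℕ) : ℝ)) * ∑ s, (c s : ℝ) * g s)) := by
  classical
  set T := ∑ s, c s with hTdef
  set A : Fin m → ℕ := fun s => ∑ u ∈ Finset.univ.filter (fun u => u < s), c u with hAdef
  have hAle : ∀ s, ∑ u ∈ Finset.univ.filter (fun u => u ≤ s), c u = A s + c s := by
    intro s
    have h : Finset.univ.filter (fun u => u ≤ s) =
        insert s (Finset.univ.filter (fun u => u < s)) := by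
      ext u
      simp [le_iff_lt_or_eq, or_comm]
    rw [h, Finset.sum_insert (by simp), Nat.add_comm]
  have hmono : ∀ s t : Fin m, s < t → A s + c s ≤ A t := by
    intro s t h
    rw [← hAle]
    apply Finset.sum_le_sum_of_subset
    intro u hu
    simp only [Finset.mem_filter, Finset.mem_univ, true_and] at *
    exact lt_of_le_of_lt hu h
  have hdisj : ∀ s t : Fin m, ∀ r : ℕ, A s ≤ r → r < A s + c s → A t ≤ r → r < A t + c t →
      s = t := by
    intro s t r h1 h2 h3 h4
    rcases lt_trichotomy s t with h | h | h
    · have := hmono s t h; omega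
    · exact h
    · have := hmono t s h; omega
  have hABle : ∀ s, A s + c s ≤ T := by
    intro s
    rw [← hAle]
    exact Finset.sum_le_sum_of_subset (Finset.filter_subset _ _)
  have hchar : ∀ n, τ' ≤ n → ∀ s : Fin m,
      A s ≤ (n - τ') % T → (n - τ') % T < A s + c s → x n = s := by
    intro n hn s hs1 hs2
    obtain ⟨h1, h2⟩ := hx2 n hn
    rw [hAle] at h2
    exact hdisj _ _ _ h1 h2 hs1 hs2
  have hper : ∀ n, τ' ≤ n → x (n + T) = x n := by
    intro n hn
    have hmod : (n + T - τ') % T = (n - τ') % T := by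
      rw [Nat.sub_add_comm hn, Nat.add_mod_right]
    obtain ⟨h1, h2⟩ := hx2 n hn
    rw [hAle] at h2
    exact hchar _ (le_trans hn (Nat.le_add_right _ _)) _ (hmod ▸ h1) (hmod ▸ h2)
  -- the sum over one block starting at τ'
  have hcard : ∀ s : Fin m,
      ((Finset.range T).filter (fun r => x (τ' + r) = s)).card = c s := by
    intro s
    have h : (Finset.range T).filter (fun r => x (τ' + r) = s) =
        Finset.Ico (A s) (A s + c s) := by
      ext r
      simp only [Finset.mem_filter, Finset.mem_range, Finset.mem_Ico]
      have hmod : (τ' + r - τ') % T = r % T := by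
        rw [Nat.add_sub_cancel_left]
      constructor
      · rintro ⟨hr, hxr⟩
        obtain ⟨h1, h2⟩ := hx2 (τ' + r) (Nat.le_add_right _ _)
        rw [hAle, hxr] at h2
        rw [hxr] at h1
        rw [hmod, Nat.mod_eq_of_lt hr] at h1 h2
        exact ⟨h1, h2⟩
      · rintro ⟨h1, h2⟩
        have hrT : r < T := lt_of_lt_of_le h2 (hABle s)
        refine ⟨hrT, hchar _ (Nat.le_add_right _ _) s ?_ ?_⟩ <;>
          rw [hmod, Nat.mod_eq_of_lt hrT]
        · exact h1
        · exact h2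
    rw [h, Nat.card_Ico]
    omega
  set P := ∑ s, (c s : ℝ) * g s with hPdef
  have hblock : ∑ r ∈ Finset.range T, g (x (τ' + r)) = P := by
    rw [← Finset.sum_fiberwise (Finset.range T) (fun r => x (τ' + r))
      (fun r => g (x (τ' + r)))]
    apply Finset.sum_congr rfl
    intro s _
    have : ∀ r ∈ (Finset.range T).filter (fun r => x (τ' + r) = s),
        g (x (τ' + r)) = g s := by
      intro r hr
      rw [(Finset.mem_filter.1 hr).2]
    rw [Finset.sum_congr rfl this, Finset.sum_const, hcard s, nsmul_eq_mul]
  have hshift : ∀ n, τ' ≤ n → ∑ r ∈ Finset.range T, g (x (n + r)) = P := by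
    intro n hn
    induction n, hn using Nat.le_induction with
    | base => exact hblock
    | succ n hn ih =>
      obtain ⟨T', hT'⟩ : ∃ T', T = T' + 1 := ⟨T - 1, by omega⟩
      rw [← ih]
      rw [hT', Finset.sum_range_succ, Finset.sum_range_succ']
      have h1 : ∀ r, n + 1 + r = n + (r + 1) := by omega
      have h2 : n + (T' + 1) = n + T := by omega
      simp only [h1]
      rw [h2, hper n hn]
      simp
  have hS : ∀ q n, τ' ≤ n → ∑ k ∈ Finset.range (n + q * T), g (x k) =
      (∑ k ∈ Finset.range n, g (x k)) + q * P := by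
    intro q
    induction q with
    | zero => intro n _; simp
    | succ q ih =>
      intro n hn
      have h : n + (q + 1) * T = (n + q * T) + T := by ring
      rw [h, Finset.sum_range_add, ih n hn, hshift (n + q * T) (le_trans hn (Nat.le_add_right _ _))]
      push_cast
      ring
  -- final assembly
  set B := ∑ k ∈ Finset.range (τ' + T), |g (x k)| with hBdef
  set C := B + |P| * ((τ' : ℝ) + T) with hCdef
  have hT0 : (0 : ℝ) < (T : ℝ) := by exact_mod_cast hT
  have hbound : ∀ n : ℕ, τ' + 1 ≤ n →
      |(1 / (n : ℝ)) * ∑ k ∈ Finset.range n, g (x k) - (1 / (T : ℝ)) * P| ≤ C / n := by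
    intro n hn
    have hn0 : (0 : ℝ) < (n : ℝ) := by
      have : 0 < n := by omega
      exact_mod_cast this
    set r := (n - τ') % T with hrdef
    set q := (n - τ') / T with hqdef
    have hrT : r < T := Nat.mod_lt _ (by omega)
    have hne : n = (τ' + r) + q * T := by
      simp only [hrdef, hqdef]
      rw [Nat.mul_comm ((n - τ') / T) T]
      have h := Nat.div_add_mod (n - τ') T
      omega
    have hSn : ∑ k ∈ Finset.range n, g (x k) =
        (∑ k ∈ Finset.range (τ' + r), g (x k)) + q * P := by
      rw [hne]; exact hS q (τ' + r) (Nat.le_add_right _ _)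
    set a := ∑ k ∈ Finset.range (τ' + r), g (x k) with hadef
    have ha : |a| ≤ B := by
      calc |a| ≤ ∑ k ∈ Finset.range (τ' + r), |g (x k)| := Finset.abs_sum_le_sum_abs _ _
        _ ≤ B := Finset.sum_le_sum_of_subset_of_nonneg
            (Finset.range_subset_range.2 (by omega)) (fun _ _ _ => abs_nonneg _)
    have hnR : (n : ℝ) = (τ' : ℝ) + r + q * T := by
      rw [hne]; push_cast; ring
    have key : (1 / (n : ℝ)) * ∑ k ∈ Finset.range n, g (x k) - (1 / (T : ℝ)) * P =
        a / n - ((τ' : ℝ) + r) * P / (n * T) := by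
      rw [hSn]
      field_simp
      linear_combination (-P) * hnR
    rw [key]
    have hnT : (0 : ℝ) < (n : ℝ) * (T : ℝ) := by positivity
    have h1 : |a / (n : ℝ) - ((τ' : ℝ) + r) * P / ((n : ℝ) * T)| ≤
        |a| / (n : ℝ) + ((τ' : ℝ) + r) * |P| / ((n : ℝ) * T) := by
      refine le_trans (abs_sub _ _) (le_of_eq ?_)
      rw [abs_div, abs_div, abs_mul, abs_of_pos hn0, abs_of_pos hnT,
        abs_of_nonneg (by positivity : (0:ℝ) ≤ (τ':ℝ) + (r:ℝ))]
    refine le_trans h1 ?_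
    have h2 : ((τ' : ℝ) + r) * |P| / ((n : ℝ) * T) ≤ |P| * ((τ' : ℝ) + T) / n := by
      rw [div_le_div_iff₀ hnT hn0]
      have hr1 : (r : ℝ) ≤ (T : ℝ) := by exact_mod_cast hrT.le
      have hT1 : (1 : ℝ) ≤ (T : ℝ) := by exact_mod_cast hT
      have hτ0 : (0 : ℝ) ≤ (τ' : ℝ) := Nat.cast_nonneg _
      nlinarith [mul_nonneg (mul_nonneg (abs_nonneg P) hn0.le)
          (mul_nonneg (by positivity : (0:ℝ) ≤ (τ':ℝ) + (T:ℝ)) (by linarith : (0:ℝ) ≤ (T:ℝ) - 1)),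
        mul_nonneg (mul_nonneg (abs_nonneg P) hn0.le)
          (by linarith : (0:ℝ) ≤ (T:ℝ) - (r:ℝ))]
    have h3 : |a| / (n : ℝ) ≤ B / n := by gcongr
    calc |a| / (n : ℝ) + ((τ' : ℝ) + r) * |P| / ((n : ℝ) * T)
        ≤ B / n + |P| * ((τ' : ℝ) + T) / n := add_le_add h3 h2
      _ = (B + |P| * ((τ' : ℝ) + T)) / n := by ring
      _ = C / n := by rw [hCdef]
  have h0 : Tendsto (fun n : ℕ => (1 / (n : ℝ)) * (∑ k ∈ Finset.range n, g (x k)) -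
      (1 / (T : ℝ)) * P) atTop (nhds 0) := by
    apply squeeze_zero_norm' (a := fun n : ℕ => C / n)
    · filter_upwards [eventually_atTop.2 ⟨τ' + 1, fun n hn => hbound n hn⟩] with n h
      simpa [Real.norm_eq_abs] using h
    · exact tendsto_const_div_atTop_nhds_zero_nat C
  have := h0.add_const ((1 / (T : ℝ)) * P)
  simpa using this
end
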